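/- Let (v,w) be a pair in a finite Weyl group with v = s_{β_{p₁}}⋯s_{β_{p_d}} w as in the GCR setup (pairwise orthogonal roots β_{p₁},…,β_{p_d} from a reduced word of w, d = l(w) − l(v)). For a subset K ⊆ {1,…,d}, let w_K = (∏_{j∈K} s_{β_{p_j}}) w. Then for distinct subsets J ≠ K of {1,…,d}, the elements w_J and w_K are distinct. -/
import Mathlib


set_option linter.unusedSectionVars false

open scoped RealInnerProductSpace
open Module

variable {V : Type*} [NormedAddCommGroup V] [InnerProductSpace ℝ V] [FiniteDimensional ℝ V]

/-- The reflection in the hyperplane orthogonal to `γ` (the identity if `γ = 0`). -/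
noncomputable def srefl (γ : V) : V →ₗ[ℝ] V :=
  LinearMap.id - (LinearMap.toSpanSingleton ℝ V ((2 / ⟪γ, γ⟫) • γ)).comp (innerSL ℝ γ).toLinearMap

lemma srefl_apply (γ x : V) : srefl γ x = x - (2 * ⟪γ, x⟫ / ⟪γ, γ⟫) • γ := by
  simp [srefl, LinearMap.toSpanSingleton, smul_smul]
  ring_nf

lemma srefl_involutive (γ : V) : Function.Involutive (srefl γ) := by
  intro x
  rcases eq_or_ne γ 0 with h | h
  · simp [srefl_apply, h]
  · have hγ : ⟪γ, γ⟫ ≠ 0 := fun hc => h (inner_self_eq_zero.mp hc)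
    rw [srefl_apply, srefl_apply, inner_sub_right, real_inner_smul_right]
    field_simp
    ring_nf
    module

/-- The reflection in `γ` as a linear automorphism of `V`. -/
noncomputable def sref (γ : V) : V ≃ₗ[ℝ] V :=
  { srefl γ with
    invFun := srefl γ
    left_inv := srefl_involutive γ
    right_inv := srefl_involutive γ }

/-- A finite reduced crystallographic root system spanning `V`. -/
structure IsRootSystem (Δ : Set V) : Prop where
  finite : Δ.Finite
  nonzero : (0 : V) ∉ Δ
  span_top : Submodule.span ℝ Δ = ⊤
  refl_mem : ∀ γ ∈ Δ, ∀ β ∈ Δ, sref γ β ∈ Δ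
  crystallographic : ∀ γ ∈ Δ, ∀ β ∈ Δ, ∃ m : ℤ, 2 * ⟪β, γ⟫ / ⟪γ, γ⟫ = (m : ℝ)
  reduced : ∀ γ ∈ Δ, ∀ t : ℝ, t • γ ∈ Δ → t = 1 ∨ t = -1

/-- The Weyl group: the subgroup of `GL(V)` generated by the reflections in the roots. -/
def weylGroup (Δ : Set V) : Subgroup (V ≃ₗ[ℝ] V) :=
  Subgroup.closure {g | ∃ γ ∈ Δ, g = sref γ}

/-- The reflection length of `w`: the least number of reflections in roots whose
product is `w`. -/
noncomputable def reflLength (Δ : Set V) (w : V ≃ₗ[ℝ] V) : ℕ :=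
  sInf {r | ∃ γ : Fin r → V, (∀ i, γ i ∈ Δ) ∧ w = (List.ofFn fun i => sref (γ i)).prod}

/-- A base (system of simple roots `α` with positive roots `Pos`) for the root system `Δ`. -/
structure IsBase (Δ Pos : Set V) {n : ℕ} (α : Fin n → V) : Prop where
  pos_subset : Pos ⊆ Δ
  simple_mem : ∀ i, α i ∈ Pos
  mem_or_neg : ∀ γ ∈ Δ, γ ∈ Pos ∨ -γ ∈ Pos
  not_neg : ∀ γ ∈ Pos, -γ ∉ Pos
  pos_combo : ∀ γ ∈ Pos, ∃ c : Fin n → ℕ, γ = ∑ j, (c j : ℝ) • α j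

/-- `l` is a word (in the simple reflections) for `w`. -/
def IsWord {n : ℕ} (α : Fin n → V) (l : List (Fin n)) (w : V ≃ₗ[ℝ] V) : Prop :=
  (l.map fun j => sref (α j)).prod = w

/-- The Coxeter length of `w` with respect to the simple system `α`. -/
noncomputable def len {n : ℕ} (α : Fin n → V) (w : V ≃ₗ[ℝ] V) : ℕ :=
  sInf {r | ∃ l : List (Fin n), IsWord α l w ∧ l.length = r}

/-- Bruhat order: `v ≤ w` iff some reduced word for `w` has a subword with value `v`. -/
def bruhatLE {n : ℕ} (α : Fin n → V) (v w : V ≃ₗ[ℝ] V) : Prop :=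
  ∃ l : List (Fin n), IsWord α l w ∧ l.length = len α w ∧
    ∃ l' : List (Fin n), l'.Sublist l ∧ IsWord α l' v

/-- The product of the simple reflections indexed by a word given as a function
`i : Fin m → Fin n`, along a list of positions. -/
noncomputable def fwordProd {n m : ℕ} (α : Fin n → V) (i : Fin m → Fin n)
    (l : List (Fin m)) : V ≃ₗ[ℝ] V :=
  (l.map fun j => sref (α (i j))).prod

/-- The full product `s_{i₁} ⋯ s_{i_m}`. -/
noncomputable def fullProd {n m : ℕ} (α : Fin n → V) (i : Fin m → Fin n) : V ≃ₗ[ℝ] V :=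
  fwordProd α i (List.finRange m)

/-- The root `β_k = s_{i₁} ⋯ s_{i_{k-1}} (α_{i_k})` associated to the `k`-th position
of the word `i` (positions indexed from `0`). -/
noncomputable def betaRoot {n m : ℕ} (α : Fin n → V) (i : Fin m → Fin n) (k : Fin m) : V :=
  fwordProd α i ((List.finRange m).take k) (α (i k))

/-- The value of the subword of `i` obtained by deleting the positions `p t`. -/
noncomputable def complProd {n m d : ℕ} (α : Fin n → V) (i : Fin m → Fin n)
    (p : Fin d → Fin m) : V ≃ₗ[ℝ] V :=
  fwordProd α i ((List.finRange m).filter fun j => ∀ t, p t ≠ j)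


/-- The element `w_K = (∏_{j ∈ K} s_{β_{p_j}}) w` (product in increasing order of `K`). -/
noncomputable def wKelt {n m d : ℕ} (α : Fin n → V) (i : Fin m → Fin n)
    (p : Fin d → Fin m) (K : Finset (Fin d)) : V ≃ₗ[ℝ] V :=
  ((K.sort (· ≤ ·)).map fun j => sref (betaRoot α i (p j))).prod * fullProd α i


lemma sref_apply' (γ x : V) : sref γ x = x - (2 * ⟪γ, x⟫ / ⟪γ, γ⟫) • γ :=
  srefl_apply γ x

lemma sref_of_orth {γ x : V} (h : ⟪γ, x⟫ = 0) : sref γ x = x := by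
  simp [sref_apply', h]

lemma sref_self {γ : V} (h : γ ≠ 0) : sref γ γ = -γ := by
  have hγ : ⟪γ, γ⟫ ≠ 0 := fun hc => h (inner_self_eq_zero.mp hc)
  rw [sref_apply', mul_div_assoc, div_self hγ, mul_one, two_smul]
  abel

lemma mul_apply' (e₁ e₂ : V ≃ₗ[ℝ] V) (x : V) : (e₁ * e₂) x = e₁ (e₂ x) := rfl

lemma fwordProd_mem {Δ Pos : Set V} {n : ℕ} {α : Fin n → V}
    (hΔ : IsRootSystem Δ) (hb : IsBase Δ Pos α)
    {m : ℕ} (i : Fin m → Fin n) (l : List (Fin m)) {x : V} (hx : x ∈ Δ) :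
    fwordProd α i l x ∈ Δ := by
  induction l with
  | nil => simpa [fwordProd] using hx
  | cons a l ih =>
    have : fwordProd α i (a :: l) x = sref (α (i a)) (fwordProd α i l x) := by
      simp only [fwordProd, List.map_cons, List.prod_cons, mul_apply']
    rw [this]
    exact hΔ.refl_mem _ (hb.pos_subset (hb.simple_mem _)) _ ih

lemma betaRoot_mem {Δ Pos : Set V} {n : ℕ} {α : Fin n → V}
    (hΔ : IsRootSystem Δ) (hb : IsBase Δ Pos α)
    {m : ℕ} (i : Fin m → Fin n) (k : Fin m) : betaRoot α i k ∈ Δ :=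
  fwordProd_mem hΔ hb i _ (hb.pos_subset (hb.simple_mem _))

lemma prod_refl_apply {n m d : ℕ} {α : Fin n → V} {i : Fin m → Fin n}
    {p : Fin d → Fin m}
    (horth : ∀ j k : Fin d, j ≠ k → ⟪betaRoot α i (p j), betaRoot α i (p k)⟫ = 0)
    (hβ : ∀ j : Fin d, betaRoot α i (p j) ≠ 0)
    (l : List (Fin d)) (hl : l.Nodup) (j : Fin d) :
    ((l.map fun t => sref (betaRoot α i (p t))).prod) (betaRoot α i (p j)) =
      if j ∈ l then -(betaRoot α i (p j)) else betaRoot α i (p j) := by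
  induction l with
  | nil => simp
  | cons a l ih =>
    have hnd := List.nodup_cons.mp hl
    have ih' := ih hnd.2
    rw [List.map_cons, List.prod_cons, mul_apply', ih']
    by_cases haj : a = j
    · subst haj
      simp [hnd.1, sref_self (hβ a)]
    · have horth' := horth a j (fun h => haj h)
      by_cases hjl : j ∈ l
      · rw [if_pos hjl, if_pos (List.mem_cons_of_mem a hjl), map_neg, sref_of_orth horth']
      · have hja : j ∉ a :: l := by simp [Ne.symm haj, hjl]
        rw [if_neg hjl, if_neg hja, sref_of_orth horth']

theorem statement12 {Δ Pos : Set V} {n : ℕ} {α : Fin n → V}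
    (hΔ : IsRootSystem Δ) (hb : IsBase Δ Pos α)
    {m d : ℕ} (i : Fin m → Fin n) (hred : len α (fullProd α i) = m)
    (p : Fin d → Fin m) (hp : StrictMono p)
    (hsub : len α (complProd α i p) = m - d)
    (horth : ∀ j k : Fin d, j ≠ k → ⟪betaRoot α i (p j), betaRoot α i (p k)⟫ = 0) :
    ∀ J K : Finset (Fin d), J ≠ K → wKelt α i p J ≠ wKelt α i p K := by
  have hβ : ∀ j : Fin d, betaRoot α i (p j) ≠ 0 := fun j h => by
    exact hΔ.nonzero (h ▸ betaRoot_mem hΔ hb i (p j))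
  have key : ∀ J K : Finset (Fin d), wKelt α i p J = wKelt α i p K → ∀ j, j ∈ J → j ∈ K := by
    intro J K hJK j hjJ
    have h2 : ((J.sort (· ≤ ·)).map fun t => sref (betaRoot α i (p t))).prod =
        ((K.sort (· ≤ ·)).map fun t => sref (betaRoot α i (p t))).prod :=
      mul_right_cancel hJK
    have hJ := prod_refl_apply horth hβ (J.sort (· ≤ ·)) (J.sort_nodup _) j
    have hK := prod_refl_apply horth hβ (K.sort (· ≤ ·)) (K.sort_nodup _) j
    rw [h2, hK] at hJ
    by_contra hjK
    rw [if_neg (by simpa [Finset.mem_sort] using hjK),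
        if_pos (by simpa [Finset.mem_sort] using hjJ)] at hJ
    have h2x : (2 : ℝ) • betaRoot α i (p j) = 0 := by
      rw [two_smul]
      linear_combination (norm := module) hJ
    rcases smul_eq_zero.mp h2x with h | h
    · norm_num at h
    · exact hβ j h
  intro J K hne heq
  exact hne (Finset.ext fun j => ⟨key J K heq j, key K J heq.symm j⟩)
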